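/- Let {x_n}, {y_n}, {z_n} be complex sequences indexed by nonzero integers satisfying x_{n1}·y_{n2} − x_{n1+n2}·z_{n2} + y_{n1+n2}·z_{−n1} = 0 for all n1 ≠ 0, n2 ≠ 0, n1+n2 ≠ 0, the parity condition (x_{−n} = conj(x_n), etc.), the summability condition ∑_{n≥1}(|x_n|+|y_n|+|z_n|) < ∞, and additionally |x_1| + |y_1| + |z_1| > 0. Then either y_n = z_n = 0 for all n ≠ 0, or x_n = z_n = 0 for all n ≠ 0, or x_n = y_n = 0 for all n ≠ 0. -/

import Mathlib

open Filter Topology Finset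

noncomputable def Complex.abs : AbsoluteValue ℂ ℝ := NormedField.toAbsoluteValue ℂ

lemma Complex.abs_conj (z : ℂ) : Complex.abs ((starRingEnd ℂ) z) = Complex.abs z := Complex.norm_conj z

noncomputable def SPBf (h : ℕ → ℝ) (m : ℕ) : ℝ := ⨆ n : ℕ, h (m + n)

noncomputable def SPSf (h : ℕ → ℝ) (m : ℕ) : ℝ := ∑' n : ℕ, h (m + n)


-- telescoping lemma
lemma tele2 (Z g : ℕ → ℝ) (hg0 : ∀ t, 0 ≤ g t) (hgsum : Summable g)
    (B w : ℝ) (hB0 : 0 ≤ B) (hw : 0 < w) (sN : ℕ) (hsN : 1 ≤ sN)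
    (hstep : ∀ j : ℕ, Z j ≤ Z (j + 1) + B * g ((j + 1) * sN) / w)
    (hZ0 : Tendsto Z atTop (𝓝 0)) :
    Z 0 ≤ w⁻¹ * (B * ∑' t, g t) := by
  have key : ∀ J : ℕ, Z 0 ≤ Z J + ∑ j ∈ range J, B * g ((j + 1) * sN) / w := by
    intro J
    induction J with
    | zero => simp
    | succ J ih =>
      calc Z 0 ≤ Z J + ∑ j ∈ range J, B * g ((j + 1) * sN) / w := ih
        _ ≤ (Z (J + 1) + B * g ((J + 1) * sN) / w) + ∑ j ∈ range J, B * g ((j + 1) * sN) / w := by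
            have := hstep J; linarith
        _ = Z (J + 1) + ∑ j ∈ range (J + 1), B * g ((j + 1) * sN) / w := by
            rw [Finset.sum_range_succ]; ring
  have hsumb : ∀ J : ℕ, ∑ j ∈ range J, B * g ((j + 1) * sN) / w ≤ w⁻¹ * (B * ∑' t, g t) := by
    intro J
    have h1 : ∑ j ∈ range J, g ((j + 1) * sN) ≤ ∑' t, g t := by
      have hinj : ∀ a ∈ range J, ∀ b ∈ range J, (a + 1) * sN = (b + 1) * sN → a = b := by
        intro a _ b _ hab
        have : a + 1 = b + 1 := Nat.eq_of_mul_eq_mul_right (by omega) hab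
        omega
      calc ∑ j ∈ range J, g ((j + 1) * sN)
          = ∑ t ∈ (range J).image (fun j => (j + 1) * sN), g t := (Finset.sum_image hinj).symm
        _ ≤ ∑' t, g t := Summable.sum_le_tsum _ (fun i _ => hg0 i) hgsum
    calc ∑ j ∈ range J, B * g ((j + 1) * sN) / w
        = (B * ∑ j ∈ range J, g ((j + 1) * sN)) / w := by
          rw [Finset.mul_sum, Finset.sum_div]
      _ ≤ (B * ∑' t, g t) / w := by gcongr
      _ = w⁻¹ * (B * ∑' t, g t) := by rw [div_eq_inv_mul]
  have := ge_of_tendsto' (f := fun J => Z J + w⁻¹ * (B * ∑' t, g t))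
    (hZ0.add_const _) (fun J => (key J).trans (by have := hsumb J; linarith))
  simpa using this

-- positive witness
lemma pos_wit {f : ℤ → ℂ} (hf : ∀ n : ℤ, f (-n) = (starRingEnd ℂ) (f n))
    (a : ℤ) (ha : a ≠ 0) (hfa : f a ≠ 0) : ∃ s : ℤ, 1 ≤ s ∧ f s ≠ 0 := by
  rcases lt_or_gt_of_ne ha with h | h
  · refine ⟨-a, by omega, fun h0 => hfa ?_⟩
    have : f (-(-a)) = (starRingEnd ℂ) (f (-a)) := hf (-a)
    rw [neg_neg] at this
    rw [this, h0, map_zero]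
  · exact ⟨a, by omega, hfa⟩

lemma conj_ne_zero {w : ℂ} (hw : w ≠ 0) : (starRingEnd ℂ) w ≠ 0 := by
  simpa using hw


lemma tail_z (x y z : ℤ → ℂ)
    (hsys : ∀ n1 n2 : ℤ, n1 ≠ 0 → n2 ≠ 0 → n1 + n2 ≠ 0 →
      x n1 * y n2 - x (n1 + n2) * z n2 + y (n1 + n2) * z (-n1) = 0)
    (hpar : ∀ n : ℤ, x (-n) = (starRingEnd ℂ) (x n) ∧ y (-n) = (starRingEnd ℂ) (y n) ∧
      z (-n) = (starRingEnd ℂ) (z n))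
    (h : ℕ → ℝ) (hsumh : Summable h)
    (hhx : ∀ n : ℕ, Complex.abs (x (n + 1)) ≤ h n)
    (hhy : ∀ n : ℕ, Complex.abs (y (n + 1)) ≤ h n)
    (hhz : ∀ n : ℕ, Complex.abs (z (n + 1)) ≤ h n)
    (s : ℤ) (hs : 1 ≤ s)
    (hw : 0 < max (Complex.abs (x s)) (Complex.abs (y s))) (m : ℕ) :
    Complex.abs (z (m + 1)) ≤ (max (Complex.abs (x s)) (Complex.abs (y s)))⁻¹ *
      (SPBf h m * SPSf h m) := by
  simp only [SPBf, SPSf]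
  have habx : ∀ n : ℤ, Complex.abs (x (-n)) = Complex.abs (x n) := fun n => by
    rw [(hpar n).1]; exact Complex.abs_conj _
  have haby : ∀ n : ℤ, Complex.abs (y (-n)) = Complex.abs (y n) := fun n => by
    rw [(hpar n).2.1]; exact Complex.abs_conj _
  have habz : ∀ n : ℤ, Complex.abs (z (-n)) = Complex.abs (z n) := fun n => by
    rw [(hpar n).2.2]; exact Complex.abs_conj _
  have hh0 : ∀ n, 0 ≤ h n := fun n => (Complex.abs.nonneg _).trans (hhx n)
  set w := max (Complex.abs (x s)) (Complex.abs (y s)) with hwdef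
  set g : ℕ → ℝ := fun t => h (m + t) with hgdef
  have hgsum : Summable g := hsumh.comp_injective (add_right_injective m)
  have hg0 : ∀ t, 0 ≤ g t := fun t => hh0 _
  have hBdd : BddAbove (Set.range g) := by
    refine ⟨∑' t, g t, ?_⟩
    rintro _ ⟨n, rfl⟩
    exact Summable.le_tsum hgsum n (fun j _ => hg0 j)
  set B : ℝ := ⨆ n : ℕ, h (m + n) with hBdef
  have hBg : ∀ t, g t ≤ B := fun t => le_ciSup hBdd t
  have hB0 : 0 ≤ B := (hg0 0).trans (hBg 0)
  set sN : ℕ := s.toNat with hsNdef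
  have hsN : (sN : ℤ) = s := Int.toNat_of_nonneg (by linarith)
  have hsN1 : 1 ≤ sN := by omega
  have castidx : ∀ j : ℕ, ((m + j * sN : ℕ) : ℤ) + 1 = (m : ℤ) + 1 + (j : ℤ) * s := by
    intro j; push_cast [hsN]; ring
  set Zf : ℕ → ℝ := fun j => Complex.abs (z (((m + j * sN : ℕ) : ℤ) + 1)) with hZfdef
  have hZ0 : Tendsto Zf atTop (𝓝 0) := by
    have hcomp : Tendsto (fun j : ℕ => m + j * sN) atTop atTop := by
      apply tendsto_atTop_mono (f := id)
      · intro j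
        simp only [id]
        calc j = j * 1 := (mul_one j).symm
          _ ≤ j * sN := Nat.mul_le_mul_left j hsN1
          _ ≤ m + j * sN := Nat.le_add_left _ _
      · exact tendsto_id
    exact squeeze_zero (fun j => Complex.abs.nonneg _)
      (fun j => hhz (m + j * sN)) ((hsumh.tendsto_atTop_zero).comp hcomp)
  -- index facts used inside steps
  have idx1 : ∀ j : ℕ, ((m + (j + 1) * sN : ℕ) : ℤ) + 1 = (m : ℤ) + 1 + ((j : ℤ) + 1) * s := by
    intro j; push_cast [hsN]; ring
  have hlt : ∀ j : ℕ, s < (m : ℤ) + 1 + ((j : ℤ) + 1) * s := by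
    intro j
    have h1 : 0 ≤ (j : ℤ) * s := mul_nonneg (Int.natCast_nonneg j) (by linarith)
    have h2 : 0 ≤ (m : ℤ) := Int.natCast_nonneg m
    linarith
  rcases le_total (Complex.abs (y s)) (Complex.abs (x s)) with hc | hc
  · -- case |y s| ≤ |x s|, w = |x s|
    have hws : w = Complex.abs (x s) := max_eq_left hc
    have hxpos : 0 < Complex.abs (x s) := hws ▸ hw
    have step : ∀ n : ℤ, s < n → Complex.abs (z (n - s)) ≤
        Complex.abs (z n) + Complex.abs (x n) * Complex.abs (y (n - s)) / w := by
      intro n hn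
      have h1 : (-n) ≠ 0 := by omega
      have h2 : n - s ≠ 0 := by omega
      have h3 : (-n) + (n - s) ≠ 0 := by omega
      have E := hsys (-n) (n - s) h1 h2 h3
      rw [show (-n) + (n - s) = -s by ring, show -(-n) = n by ring] at E
      have EX : x (-s) * z (n - s) = y (-s) * z n + x (-n) * y (n - s) := by
        linear_combination -E
      have habs1 : Complex.abs (x s) * Complex.abs (z (n - s)) ≤
          Complex.abs (y s) * Complex.abs (z n) +
            Complex.abs (x n) * Complex.abs (y (n - s)) := by
        calc Complex.abs (x s) * Complex.abs (z (n - s))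
            = Complex.abs (x (-s)) * Complex.abs (z (n - s)) := by rw [habx]
          _ = Complex.abs (x (-s) * z (n - s)) := (map_mul Complex.abs _ _).symm
          _ = Complex.abs (y (-s) * z n + x (-n) * y (n - s)) := by rw [EX]
          _ ≤ Complex.abs (y (-s) * z n) + Complex.abs (x (-n) * y (n - s)) :=
              Complex.abs.add_le _ _
          _ = Complex.abs (y s) * Complex.abs (z n) +
                Complex.abs (x n) * Complex.abs (y (n - s)) := by
              rw [map_mul, map_mul, haby, habx]
      rw [hws]
      have key : Complex.abs (z (n - s)) * Complex.abs (x s) ≤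
          (Complex.abs (z n) + Complex.abs (x n) * Complex.abs (y (n - s)) / Complex.abs (x s)) *
            Complex.abs (x s) := by
        rw [add_mul, div_mul_cancel₀ _ (ne_of_gt hxpos)]
        nlinarith [Complex.abs.nonneg (z n)]
      exact le_of_mul_le_mul_right key hxpos
    have hstep : ∀ j : ℕ, Zf j ≤ Zf (j + 1) + B * g ((j + 1) * sN) / w := by
      intro j
      have := step ((m : ℤ) + 1 + ((j : ℤ) + 1) * s) (hlt j)
      rw [show (m : ℤ) + 1 + ((j : ℤ) + 1) * s - s = (m : ℤ) + 1 + (j : ℤ) * s by ring] at this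
      have e1 : Zf j = Complex.abs (z ((m : ℤ) + 1 + (j : ℤ) * s)) := by
        rw [show Zf j = Complex.abs (z (((m + j * sN : ℕ) : ℤ) + 1)) from rfl, castidx j]
      have e2 : Zf (j + 1) = Complex.abs (z ((m : ℤ) + 1 + ((j : ℤ) + 1) * s)) := by
        rw [show Zf (j + 1) = Complex.abs (z (((m + (j + 1) * sN : ℕ) : ℤ) + 1)) from rfl, idx1 j]
      rw [e1, e2]
      refine this.trans ?_
      refine add_le_add le_rfl ((div_le_div_iff_of_pos_right hw).mpr ?_)
      · have hx1 : Complex.abs (x ((m : ℤ) + 1 + ((j : ℤ) + 1) * s)) ≤ g ((j + 1) * sN) := by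
          have := hhx (m + (j + 1) * sN)
          rwa [idx1 j] at this
        have hy1 : Complex.abs (y ((m : ℤ) + 1 + (j : ℤ) * s)) ≤ B := by
          have := hhy (m + j * sN)
          rw [castidx j] at this
          exact this.trans (hBg (j * sN))
        exact (mul_le_mul hx1 hy1 (Complex.abs.nonneg _) (hg0 _)).trans
          (le_of_eq (mul_comm _ _))
    have main := tele2 Zf g hg0 hgsum B w hB0 hw sN hsN1 hstep hZ0
    have : Zf 0 = Complex.abs (z ((m : ℤ) + 1)) := by
      rw [show Zf 0 = Complex.abs (z (((m + 0 * sN : ℕ) : ℤ) + 1)) from rfl]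
      norm_num
    rw [this] at main
    exact main
  · -- case |x s| ≤ |y s|, w = |y s|
    have hws : w = Complex.abs (y s) := max_eq_right hc
    have hypos : 0 < Complex.abs (y s) := hws ▸ hw
    have step : ∀ n : ℤ, s < n → Complex.abs (z (n - s)) ≤
        Complex.abs (z n) + Complex.abs (x (n - s)) * Complex.abs (y n) / w := by
      intro n hn
      have h1 : n - s ≠ 0 := by omega
      have h2 : (-n) ≠ 0 := by omega
      have h3 : (n - s) + (-n) ≠ 0 := by omega
      have E := hsys (n - s) (-n) h1 h2 h3
      rw [show (n - s) + (-n) = -s by ring] at E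
      -- E : x (n-s) * y (-n) - x (-s) * z (-n) + y (-s) * z (-(n-s)) = 0
      have EX : y (-s) * z (-(n - s)) = x (-s) * z (-n) - x (n - s) * y (-n) := by
        linear_combination E
      have habs1 : Complex.abs (y s) * Complex.abs (z (n - s)) ≤
          Complex.abs (x s) * Complex.abs (z n) +
            Complex.abs (x (n - s)) * Complex.abs (y n) := by
        calc Complex.abs (y s) * Complex.abs (z (n - s))
            = Complex.abs (y (-s)) * Complex.abs (z (-(n - s))) := by rw [haby, habz]
          _ = Complex.abs (y (-s) * z (-(n - s))) := (map_mul Complex.abs _ _).symm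
          _ = Complex.abs (x (-s) * z (-n) - x (n - s) * y (-n)) := by rw [EX]
          _ = Complex.abs (x (-s) * z (-n) + -(x (n - s) * y (-n))) := by rw [sub_eq_add_neg]
          _ ≤ Complex.abs (x (-s) * z (-n)) + Complex.abs (-(x (n - s) * y (-n))) :=
              Complex.abs.add_le _ _
          _ = Complex.abs (x (-s) * z (-n)) + Complex.abs (x (n - s) * y (-n)) := by
              rw [Complex.abs.map_neg]
          _ = Complex.abs (x s) * Complex.abs (z n) +
                Complex.abs (x (n - s)) * Complex.abs (y n) := by
              rw [map_mul, map_mul, habx, habz, haby]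
      rw [hws]
      have key : Complex.abs (z (n - s)) * Complex.abs (y s) ≤
          (Complex.abs (z n) + Complex.abs (x (n - s)) * Complex.abs (y n) / Complex.abs (y s)) *
            Complex.abs (y s) := by
        rw [add_mul, div_mul_cancel₀ _ (ne_of_gt hypos)]
        nlinarith [Complex.abs.nonneg (z n)]
      exact le_of_mul_le_mul_right key hypos
    have hstep : ∀ j : ℕ, Zf j ≤ Zf (j + 1) + B * g ((j + 1) * sN) / w := by
      intro j
      have := step ((m : ℤ) + 1 + ((j : ℤ) + 1) * s) (hlt j)
      rw [show (m : ℤ) + 1 + ((j : ℤ) + 1) * s - s = (m : ℤ) + 1 + (j : ℤ) * s by ring] at this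
      have e1 : Zf j = Complex.abs (z ((m : ℤ) + 1 + (j : ℤ) * s)) := by
        rw [show Zf j = Complex.abs (z (((m + j * sN : ℕ) : ℤ) + 1)) from rfl, castidx j]
      have e2 : Zf (j + 1) = Complex.abs (z ((m : ℤ) + 1 + ((j : ℤ) + 1) * s)) := by
        rw [show Zf (j + 1) = Complex.abs (z (((m + (j + 1) * sN : ℕ) : ℤ) + 1)) from rfl, idx1 j]
      rw [e1, e2]
      refine this.trans ?_
      refine add_le_add le_rfl ((div_le_div_iff_of_pos_right hw).mpr ?_)
      · have hx1 : Complex.abs (x ((m : ℤ) + 1 + (j : ℤ) * s)) ≤ B := by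
          have := hhx (m + j * sN)
          rw [castidx j] at this
          exact this.trans (hBg (j * sN))
        have hy1 : Complex.abs (y ((m : ℤ) + 1 + ((j : ℤ) + 1) * s)) ≤ g ((j + 1) * sN) := by
          have := hhy (m + (j + 1) * sN)
          rwa [idx1 j] at this
        exact mul_le_mul hx1 hy1 (Complex.abs.nonneg _) hB0
    have main := tele2 Zf g hg0 hgsum B w hB0 hw sN hsN1 hstep hZ0
    have : Zf 0 = Complex.abs (z ((m : ℤ) + 1)) := by
      rw [show Zf 0 = Complex.abs (z (((m + 0 * sN : ℕ) : ℤ) + 1)) from rfl]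
      norm_num
    rw [this] at main
    exact main



lemma conj_eq_zero' {w : ℂ} : (starRingEnd ℂ) w = 0 ↔ w = 0 := map_eq_zero _

lemma fin_supp_contra (x y z : ℤ → ℂ)
    (hsys : ∀ n1 n2 : ℤ, n1 ≠ 0 → n2 ≠ 0 → n1 + n2 ≠ 0 →
      x n1 * y n2 - x (n1 + n2) * z n2 + y (n1 + n2) * z (-n1) = 0)
    (hpar : ∀ n : ℤ, x (-n) = (starRingEnd ℂ) (x n) ∧ y (-n) = (starRingEnd ℂ) (y n) ∧
      z (-n) = (starRingEnd ℂ) (z n))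
    (p : ℤ) (hp1 : 1 ≤ p) (hxp : x p ≠ 0) (hx0 : ∀ n : ℤ, p < n → x n = 0)
    (m0 : ℤ) (hm0 : 1 ≤ m0) (hym : y m0 ≠ 0)
    (k : ℤ) (hk : 1 ≤ k) (hzk : z k ≠ 0) : False := by
  -- Step A : z p ≠ 0
  have zp : z p ≠ 0 := by
    intro hzp
    have hy : y m0 = 0 := by
      have E := hsys p m0 (by omega) (by omega) (by omega)
      rw [hx0 (p + m0) (by omega), (hpar p).2.2, hzp, map_zero] at E
      have : x p * y m0 = 0 := by linear_combination E
      rcases mul_eq_zero.mp this with h | h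
      · exact absurd h hxp
      · exact h
    exact hym hy
  -- Step B : y (m0 + j * p) ≠ 0 for all j : ℕ
  have yAP : ∀ j : ℕ, y (m0 + (j : ℤ) * p) ≠ 0 := by
    intro j
    induction j with
    | zero => simpa using hym
    | succ j ih =>
      set u := m0 + (j : ℤ) * p with hu
      have hu1 : 1 ≤ u := by
        have : 0 ≤ (j : ℤ) * p := mul_nonneg (Int.natCast_nonneg j) (by omega)
        omega
      have E := hsys p u (by omega) (by omega) (by omega)
      rw [hx0 (p + u) (by omega)] at E
      have hidx : m0 + ((j + 1 : ℕ) : ℤ) * p = p + u := by rw [hu]; push_cast; ring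
      rw [hidx]
      intro h0
      rw [h0] at E
      have : x p * y u = 0 := by linear_combination E
      rcases mul_eq_zero.mp this with h | h
      · exact hxp h
      · exact ih h
  -- Step C : z a = 0 for all a > p
  have zpos : ∀ a : ℤ, p < a → z a = 0 := by
    intro a ha
    set j := a.toNat with hj
    have hja : (j : ℤ) = a := Int.toNat_of_nonneg (by omega)
    set u := m0 + (j : ℤ) * p with hu
    have hau : a < u := by
      have h1 : (j : ℤ) * 1 ≤ (j : ℤ) * p := by
        apply mul_le_mul_of_nonneg_left (by omega) (by omega)
      omega
    have E := hsys a (u - a) (by omega) (by omega) (by omega)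
    rw [show a + (u - a) = u by ring] at E
    rw [hx0 a ha, hx0 u (by omega)] at E
    have : y u * z (-a) = 0 := by linear_combination E
    rcases mul_eq_zero.mp this with h | h
    · exact absurd h (yAP j)
    · have : (starRingEnd ℂ) (z a) = 0 := by rw [← (hpar a).2.2]; exact h
      exact conj_eq_zero'.mp this
  -- Step D : z v = 0 for all v ≤ -1
  have zneg : ∀ v : ℤ, v ≤ -1 → z v = 0 := by
    intro v hv
    set u := p - v with hu
    have hup : p < u := by omega
    have E := hsys u v (by omega) (by omega) (by omega)
    rw [show u + v = p by rw [hu]; ring] at E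
    rw [hx0 u hup] at E
    have hzu : z (-u) = 0 := by
      rw [(hpar u).2.2, zpos u hup, map_zero]
    rw [hzu] at E
    have : x p * z v = 0 := by linear_combination -E
    rcases mul_eq_zero.mp this with h | h
    · exact absurd h hxp
    · exact h
  -- conclude
  have : z (-k) = 0 := zneg (-k) (by omega)
  rw [(hpar k).2.2] at this
  exact hzk (conj_eq_zero'.mp this)


lemma SP_main_contra (x y z : ℤ → ℂ)
    (hsys : ∀ n1 n2 : ℤ, n1 ≠ 0 → n2 ≠ 0 → n1 + n2 ≠ 0 →
      x n1 * y n2 - x (n1 + n2) * z n2 + y (n1 + n2) * z (-n1) = 0)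
    (hpar : ∀ n : ℤ, x (-n) = (starRingEnd ℂ) (x n) ∧ y (-n) = (starRingEnd ℂ) (y n) ∧
      z (-n) = (starRingEnd ℂ) (z n))
    (hsum : Summable (fun n : ℕ => Complex.abs (x (n + 1)) + Complex.abs (y (n + 1)) + Complex.abs (z (n + 1))))
    (s1 : ℤ) (hs1 : 1 ≤ s1) (hxs1 : x s1 ≠ 0)
    (s2 : ℤ) (hs2 : 1 ≤ s2) (hys2 : y s2 ≠ 0)
    (s3 : ℤ) (hs3 : 1 ≤ s3) (hzs3 : z s3 ≠ 0) : False := by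
  set h : ℕ → ℝ := fun n =>
    Complex.abs (x (n + 1)) + Complex.abs (y (n + 1)) + Complex.abs (z (n + 1)) with hhdef
  have hsumh : Summable h := hsum
  have hhx : ∀ n : ℕ, Complex.abs (x (n + 1)) ≤ h n := fun n => by
    have h1 := Complex.abs.nonneg (y ((n : ℤ) + 1))
    have h2 := Complex.abs.nonneg (z ((n : ℤ) + 1))
    simp only [hhdef]; linarith
  have hhy : ∀ n : ℕ, Complex.abs (y (n + 1)) ≤ h n := fun n => by
    have h1 := Complex.abs.nonneg (x ((n : ℤ) + 1))
    have h2 := Complex.abs.nonneg (z ((n : ℤ) + 1))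
    simp only [hhdef]; linarith
  have hhz : ∀ n : ℕ, Complex.abs (z (n + 1)) ≤ h n := fun n => by
    have h1 := Complex.abs.nonneg (x ((n : ℤ) + 1))
    have h2 := Complex.abs.nonneg (y ((n : ℤ) + 1))
    simp only [hhdef]; linarith
  have hh0 : ∀ n : ℕ, 0 ≤ h n := fun n => (Complex.abs.nonneg _).trans (hhx n)
  have habx : ∀ n : ℤ, Complex.abs (x (-n)) = Complex.abs (x n) := fun n => by
    rw [(hpar n).1]; exact Complex.abs_conj _
  have haby : ∀ n : ℤ, Complex.abs (y (-n)) = Complex.abs (y n) := fun n => by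
    rw [(hpar n).2.1]; exact Complex.abs_conj _
  have habz : ∀ n : ℤ, Complex.abs (z (-n)) = Complex.abs (z n) := fun n => by
    rw [(hpar n).2.2]; exact Complex.abs_conj _
  -- application 1 : bound on z
  have w1pos : 0 < max (Complex.abs (x s1)) (Complex.abs (y s1)) :=
    lt_of_lt_of_le (Complex.abs.pos hxs1) (le_max_left _ _)
  have Hz : ∀ m : ℕ, Complex.abs (z (m + 1)) ≤
      (max (Complex.abs (x s1)) (Complex.abs (y s1)))⁻¹ * (SPBf h m * SPSf h m) :=
    tail_z x y z hsys hpar h hsumh hhx hhy hhz s1 hs1 w1pos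
  -- application 2 : system (−x∘neg, z, y) bounds y
  have Hy : ∀ m : ℕ, Complex.abs (y (m + 1)) ≤
      (max (Complex.abs (-x (-s1))) (Complex.abs (z s1)))⁻¹ * (SPBf h m * SPSf h m) := by
    refine tail_z (fun n => -x (-n)) z y ?_ ?_ h hsumh ?_ hhz hhy s1 hs1 ?_
    · intro n1 n2 h1 h2 h3
      show -x (-n1) * z n2 - -x (-(n1 + n2)) * y n2 + z (n1 + n2) * y (-n1) = 0
      have E := hsys (-n1 - n2) n2 (by omega) h2 (by omega)
      rw [show -n1 - n2 + n2 = -n1 by ring, show -(-n1 - n2) = n1 + n2 by ring] at E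
      rw [show -(n1 + n2) = -n1 - n2 by ring]
      linear_combination E
    · intro n
      refine ⟨?_, (hpar n).2.2, (hpar n).2.1⟩
      show -x (-(-n)) = (starRingEnd ℂ) (-x (-n))
      have hx := (hpar (-n)).1
      rw [neg_neg] at hx
      rw [neg_neg, map_neg, ← hx]
    · intro n
      show Complex.abs (-x (-((n : ℤ) + 1))) ≤ h n
      rw [Complex.abs.map_neg, habx]
      exact hhx n
    · show 0 < max (Complex.abs (-x (-s1))) (Complex.abs (z s1))
      rw [Complex.abs.map_neg, habx]
      exact lt_of_lt_of_le (Complex.abs.pos hxs1) (le_max_left _ _)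
  rw [Complex.abs.map_neg, habx] at Hy
  -- application 3 : system (−y∘neg, −z∘neg, x) bounds x
  have Hx : ∀ m : ℕ, Complex.abs (x (m + 1)) ≤
      (max (Complex.abs (-y (-s2))) (Complex.abs (-z (-s2))))⁻¹ * (SPBf h m * SPSf h m) := by
    refine tail_z (fun n => -y (-n)) (fun n => -z (-n)) x ?_ ?_ h hsumh ?_ ?_ hhx s2 hs2 ?_
    · intro n1 n2 h1 h2 h3
      show -y (-n1) * -z (-n2) - -y (-(n1 + n2)) * x n2 + -z (-(n1 + n2)) * x (-n1) = 0
      have E := hsys n2 (-n1 - n2) h2 (by omega) (by omega)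
      rw [show n2 + (-n1 - n2) = -n1 by ring] at E
      rw [show -(n1 + n2) = -n1 - n2 by ring]
      linear_combination E
    · intro n
      refine ⟨?_, ?_, (hpar n).1⟩
      · show -y (-(-n)) = (starRingEnd ℂ) (-y (-n))
        have hyy := (hpar (-n)).2.1
        rw [neg_neg] at hyy
        rw [neg_neg, map_neg, ← hyy]
      · show -z (-(-n)) = (starRingEnd ℂ) (-z (-n))
        have hzz := (hpar (-n)).2.2
        rw [neg_neg] at hzz
        rw [neg_neg, map_neg, ← hzz]
    · intro n
      show Complex.abs (-y (-((n : ℤ) + 1))) ≤ h n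
      rw [Complex.abs.map_neg, haby]
      exact hhy n
    · intro n
      show Complex.abs (-z (-((n : ℤ) + 1))) ≤ h n
      rw [Complex.abs.map_neg, habz]
      exact hhz n
    · show 0 < max (Complex.abs (-y (-s2))) (Complex.abs (-z (-s2)))
      rw [Complex.abs.map_neg, haby]
      exact lt_of_lt_of_le (Complex.abs.pos hys2) (le_max_left _ _)
  rw [Complex.abs.map_neg, haby, Complex.abs.map_neg, habz] at Hx
  -- bootstrap
  have a2 : 0 < max (Complex.abs (x s1)) (Complex.abs (z s1)) :=
    lt_of_lt_of_le (Complex.abs.pos hxs1) (le_max_left _ _)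
  have a3 : 0 < max (Complex.abs (y s2)) (Complex.abs (z s2)) :=
    lt_of_lt_of_le (Complex.abs.pos hys2) (le_max_left _ _)
  set K : ℝ := (max (Complex.abs (x s1)) (Complex.abs (y s1)))⁻¹ +
    (max (Complex.abs (x s1)) (Complex.abs (z s1)))⁻¹ +
    (max (Complex.abs (y s2)) (Complex.abs (z s2)))⁻¹ with hKdef
  have hK0 : 0 < K := by
    have b1 := inv_pos.mpr w1pos
    have b2 := inv_pos.mpr a2
    have b3 := inv_pos.mpr a3
    rw [hKdef]; linarith
  have hSsum : ∀ m : ℕ, Summable (fun n : ℕ => h (m + n)) := fun m =>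
    hsumh.comp_injective (add_right_injective m)
  have hBdd : ∀ m : ℕ, BddAbove (Set.range fun n : ℕ => h (m + n)) := fun m => by
    refine ⟨SPSf h m, ?_⟩
    rintro _ ⟨n, rfl⟩
    exact Summable.le_tsum (hSsum m) n (fun j _ => hh0 _)
  have hS0 : ∀ m, 0 ≤ SPSf h m := fun m => by
    simp only [SPSf]; exact tsum_nonneg fun n => hh0 _
  have hB0 : ∀ m, 0 ≤ SPBf h m := fun m => by
    simp only [SPBf]
    exact (hh0 m).trans (by simpa using le_ciSup (hBdd m) 0)
  have hBanti : ∀ m d : ℕ, SPBf h (m + d) ≤ SPBf h m := fun m d => by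
    simp only [SPBf]
    refine ciSup_le fun n => ?_
    have hle : h (m + (d + n)) ≤ ⨆ k : ℕ, h (m + k) := le_ciSup (hBdd m) (d + n)
    rwa [show m + (d + n) = m + d + n by ring] at hle
  have hSanti : ∀ m d : ℕ, SPSf h (m + d) ≤ SPSf h m := fun m d => by
    simp only [SPSf]
    refine Summable.tsum_le_tsum_of_inj (fun n => d + n) (add_right_injective d)
      (fun c _ => hh0 _) (fun n => ?_) (hSsum (m + d)) (hSsum m)
    exact le_of_eq (by rw [show m + d + n = m + (d + n) by ring])
  have hStend : Tendsto (fun m => SPSf h m) atTop (nhds 0) := by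
    have base := tendsto_sum_nat_add h
    have heq : (fun i => ∑' k : ℕ, h (k + i)) = fun m => SPSf h m := by
      funext i
      simp only [SPSf]
      exact tsum_congr fun k => by rw [add_comm]
    rwa [heq] at base
  have hev : ∀ᶠ m in atTop, SPSf h m < K⁻¹ :=
    hStend.eventually (gt_mem_nhds (inv_pos.mpr hK0))
  obtain ⟨M, hM⟩ := hev.exists
  have hq1 : K * SPSf h M < 1 := by
    have hmul := mul_lt_mul_of_pos_left hM hK0
    rwa [mul_inv_cancel₀ (ne_of_gt hK0)] at hmul
  have hhK : ∀ m : ℕ, h m ≤ K * (SPBf h m * SPSf h m) := by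
    intro m
    have e1 := Hx m
    have e2 := Hy m
    have e3 := Hz m
    have hhm : h m = Complex.abs (x (m + 1)) + Complex.abs (y (m + 1)) + Complex.abs (z (m + 1)) := rfl
    rw [hhm, hKdef]
    have hBS : 0 ≤ SPBf h m * SPSf h m := mul_nonneg (hB0 m) (hS0 m)
    nlinarith [e1, e2, e3]
  have hstepj : ∀ j : ℕ, h (M + j) ≤ (K * SPSf h M) * SPBf h M := by
    intro j
    have t0 := hhK (M + j)
    have t1 : SPBf h (M + j) * SPSf h (M + j) ≤ SPBf h M * SPSf h M :=
      mul_le_mul (hBanti M j) (hSanti M j) (hS0 _) (hB0 M)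
    have t2 : K * (SPBf h (M + j) * SPSf h (M + j)) ≤ K * (SPBf h M * SPSf h M) :=
      mul_le_mul_of_nonneg_left t1 (le_of_lt hK0)
    calc h (M + j) ≤ K * (SPBf h M * SPSf h M) := t0.trans t2
      _ = (K * SPSf h M) * SPBf h M := by ring
  have hBM : SPBf h M ≤ (K * SPSf h M) * SPBf h M := by
    have hsup : (⨆ n : ℕ, h (M + n)) ≤ (K * SPSf h M) * SPBf h M := ciSup_le hstepj
    simpa [SPBf] using hsup
  have hBM0 : SPBf h M = 0 := by
    have hB_le : SPBf h M ≤ 0 := by nlinarith [hq1, hBM, hB0 M]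
    exact le_antisymm hB_le (hB0 M)
  have hzero : ∀ j : ℕ, h (M + j) = 0 := by
    intro j
    have hle : h (M + j) ≤ SPBf h M := by
      have := le_ciSup (hBdd M) j
      simpa [SPBf] using this
    rw [hBM0] at hle
    exact le_antisymm hle (hh0 _)
  have hxvan : ∀ n : ℤ, (M : ℤ) + 1 ≤ n → x n = 0 := by
    intro n hn
    set j : ℕ := (n - ((M : ℤ) + 1)).toNat with hjdef
    have hj : (j : ℤ) = n - ((M : ℤ) + 1) := Int.toNat_of_nonneg (by omega)
    have hidx : ((M + j : ℕ) : ℤ) + 1 = n := by push_cast; omega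
    have h0 : Complex.abs (x (((M + j : ℕ) : ℤ) + 1)) + Complex.abs (y (((M + j : ℕ) : ℤ) + 1))
        + Complex.abs (z (((M + j : ℕ) : ℤ) + 1)) = 0 := hzero j
    have n2 := Complex.abs.nonneg (y (((M + j : ℕ) : ℤ) + 1))
    have n3 := Complex.abs.nonneg (z (((M + j : ℕ) : ℤ) + 1))
    have n1 := Complex.abs.nonneg (x (((M + j : ℕ) : ℤ) + 1))
    have hxx : Complex.abs (x (((M + j : ℕ) : ℤ) + 1)) = 0 := by linarith
    rw [hidx] at hxx
    exact Complex.abs.eq_zero.mp hxx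
  have Hbdd : ∃ b : ℤ, ∀ n : ℤ, (1 ≤ n ∧ x n ≠ 0) → n ≤ b := by
    refine ⟨(M : ℤ), fun n hn => ?_⟩
    by_contra hc
    exact hn.2 (hxvan n (by omega))
  obtain ⟨p, ⟨hp1, hxp⟩, hmax⟩ := Int.exists_greatest_of_bdd Hbdd ⟨s1, hs1, hxs1⟩
  have hx0 : ∀ n : ℤ, p < n → x n = 0 := by
    intro n hn
    by_contra hc
    have := hmax n ⟨by omega, hc⟩
    omega
  exact fin_supp_contra x y z hsys hpar p hp1 hxp hx0 s2 hs2 hys2 s3 hs3 hzs3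

theorem stmt_1 (x y z : ℤ → ℂ)
    (hsys : ∀ n1 n2 : ℤ, n1 ≠ 0 → n2 ≠ 0 → n1 + n2 ≠ 0 →
      x n1 * y n2 - x (n1 + n2) * z n2 + y (n1 + n2) * z (-n1) = 0)
    (hpar : ∀ n : ℤ, x (-n) = (starRingEnd ℂ) (x n) ∧ y (-n) = (starRingEnd ℂ) (y n) ∧
      z (-n) = (starRingEnd ℂ) (z n))
    (hsum : Summable (fun n : ℕ => ‖x (n + 1)‖ + ‖y (n + 1)‖ + ‖z (n + 1)‖))
    (h1 : 0 < ‖x 1‖ + ‖y 1‖ + ‖z 1‖) :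
    (∀ n : ℤ, n ≠ 0 → y n = 0 ∧ z n = 0) ∨
    (∀ n : ℤ, n ≠ 0 → x n = 0 ∧ z n = 0) ∨
    (∀ n : ℤ, n ≠ 0 → x n = 0 ∧ y n = 0) := by
  by_cases hX : ∀ n : ℤ, n ≠ 0 → x n = 0
  · by_cases hY : ∀ n : ℤ, n ≠ 0 → y n = 0
    · exact Or.inr (Or.inr fun n hn => ⟨hX n hn, hY n hn⟩)
    · by_cases hZ : ∀ n : ℤ, n ≠ 0 → z n = 0
      · exact Or.inr (Or.inl fun n hn => ⟨hX n hn, hZ n hn⟩)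
      · -- x ≡ 0, y ≢ 0, z ≢ 0 : contradiction
        exfalso
        push_neg at hY hZ
        obtain ⟨b, hb0, hyb⟩ := hY
        obtain ⟨c, hc0, hzc⟩ := hZ
        obtain ⟨q, hq1, hyq⟩ := pos_wit (fun n => (hpar n).2.1) b hb0 hyb
        obtain ⟨k, hk1, hzk⟩ := pos_wit (fun n => (hpar n).2.2) c hc0 hzc
        have E := hsys (-k) (q + k) (by omega) (by omega) (by omega)
        rw [show -k + (q + k) = q by ring, show -(-k) = k by ring] at E
        rw [hX (-k) (by omega), hX q (by omega)] at E
        have hyz : y q * z k = 0 := by linear_combination E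
        rcases mul_eq_zero.mp hyz with h | h
        · exact hyq h
        · exact hzk h
  · by_cases hY : ∀ n : ℤ, n ≠ 0 → y n = 0
    · by_cases hZ : ∀ n : ℤ, n ≠ 0 → z n = 0
      · exact Or.inl fun n hn => ⟨hY n hn, hZ n hn⟩
      · -- x ≢ 0, y ≡ 0, z ≢ 0 : contradiction
        exfalso
        push_neg at hX hZ
        obtain ⟨a, ha0, hxa⟩ := hX
        obtain ⟨c, hc0, hzc⟩ := hZ
        obtain ⟨p, hp1, hxp⟩ := pos_wit (fun n => (hpar n).1) a ha0 hxa
        obtain ⟨k, hk1, hzk⟩ := pos_wit (fun n => (hpar n).2.2) c hc0 hzc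
        have E := hsys (p + k) (-k) (by omega) (by omega) (by omega)
        rw [show p + k + -k = p by ring] at E
        rw [hY (-k) (by omega), hY p (by omega)] at E
        have hxz : x p * z (-k) = 0 := by linear_combination -E
        rcases mul_eq_zero.mp hxz with h | h
        · exact hxp h
        · rw [(hpar k).2.2] at h
          exact hzk (conj_eq_zero'.mp h)
    · by_cases hZ : ∀ n : ℤ, n ≠ 0 → z n = 0
      · -- x ≢ 0, y ≢ 0, z ≡ 0 : contradiction
        exfalso
        push_neg at hX hY
        obtain ⟨a, ha0, hxa⟩ := hX
        obtain ⟨b, hb0, hyb⟩ := hY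
        obtain ⟨p, hp1, hxp⟩ := pos_wit (fun n => (hpar n).1) a ha0 hxa
        obtain ⟨q, hq1, hyq⟩ := pos_wit (fun n => (hpar n).2.1) b hb0 hyb
        have E := hsys p q (by omega) (by omega) (by omega)
        rw [hZ q (by omega), hZ (-p) (by omega)] at E
        have hxy : x p * y q = 0 := by linear_combination E
        rcases mul_eq_zero.mp hxy with h | h
        · exact hxp h
        · exact hyq h
      · -- all three nonzero somewhere : main contradiction
        exfalso
        push_neg at hX hY hZ
        obtain ⟨a, ha0, hxa⟩ := hX
        obtain ⟨b, hb0, hyb⟩ := hY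
        obtain ⟨c, hc0, hzc⟩ := hZ
        obtain ⟨s1, hs1, hxs1⟩ := pos_wit (fun n => (hpar n).1) a ha0 hxa
        obtain ⟨s2, hs2, hys2⟩ := pos_wit (fun n => (hpar n).2.1) b hb0 hyb
        obtain ⟨s3, hs3, hzs3⟩ := pos_wit (fun n => (hpar n).2.2) c hc0 hzc
        exact SP_main_contra x y z hsys hpar hsum s1 hs1 hxs1 s2 hs2 hys2 s3 hs3 hzs3
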